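/- Let L ≥ 0 be an integer and set n = 2L + 1. The n points xᵢ = (cos(2πi/n), sin(2πi/n)) for i = 0, 1, …, n−1 (the vertices of a regular (2L+1)-gon inscribed in the unit circle S¹ ⊂ ℝ²) form a spherical 2L-design: for every real polynomial p in two variables of total degree at most 2L, (1/n) Σ_{i=0}^{n−1} p(xᵢ) = (1/(2π)) ∫_0^{2π} p(cos θ, sin θ) dθ. -/

import Mathlib

open scoped Real
open Complex Finset

private lemma exp_term (a b s t : ℕ) (hs : s ≤ a) (ht : t ≤ b) (θ : ℝ) :
    Complex.exp ((θ:ℂ) * I) ^ s * Complex.exp (-(θ:ℂ) * I) ^ (a - s) *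
      (Complex.exp ((θ:ℂ) * I) ^ t * Complex.exp (-(θ:ℂ) * I) ^ (b - t)) =
    Complex.exp ((2*(s:ℂ) + 2*(t:ℂ) - (a:ℂ) - (b:ℂ)) * θ * I) := by
  rw [← Complex.exp_nat_mul, ← Complex.exp_nat_mul, ← Complex.exp_nat_mul,
    ← Complex.exp_nat_mul, ← Complex.exp_add, ← Complex.exp_add, ← Complex.exp_add]
  congr 1
  rw [Nat.cast_sub hs, Nat.cast_sub ht]
  ring

private lemma trig_expand (a b : ℕ) (θ : ℝ) :
    ((Real.cos θ ^ a * Real.sin θ ^ b : ℝ) : ℂ) =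
    ∑ s ∈ Finset.range (a+1), ∑ t ∈ Finset.range (b+1),
      ((a.choose s : ℂ) * (b.choose t) * (-1)^(b-t) / (2^a * (2*I)^b)) *
        Complex.exp ((2*(s:ℂ) + 2*(t:ℂ) - (a:ℂ) - (b:ℂ)) * θ * I) := by
  have hsin : Complex.sin (θ:ℂ) = (Complex.exp ((θ:ℂ)*I) + -Complex.exp (-(θ:ℂ)*I)) / (2*I) := by
    rw [Complex.sin]
    field_simp
    ring_nf
    simp [Complex.I_sq]
  have hcos : Complex.cos (θ:ℂ) = (Complex.exp ((θ:ℂ)*I) + Complex.exp (-(θ:ℂ)*I)) / 2 := by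
    rw [Complex.cos]
  push_cast
  rw [hsin, hcos, div_pow, div_pow, add_pow, add_pow, Finset.sum_div, Finset.sum_div,
    Finset.sum_mul_sum]
  refine Finset.sum_congr rfl fun s hs => Finset.sum_congr rfl fun t ht => ?_
  rw [← exp_term a b s t (Finset.mem_range_succ_iff.mp hs) (Finset.mem_range_succ_iff.mp ht) θ]
  ring

private lemma sum_exp (L : ℕ) (k : ℤ) (h1 : -(2*(L:ℤ)+1) < k) (h2 : k < 2*(L:ℤ)+1) :
    ∑ i : Fin (2*L+1), Complex.exp ((k:ℂ) * (2 * (π:ℂ) * ((i:ℕ):ℂ) / (2*(L:ℂ)+1)) * I)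
      = if k = 0 then (2*(L:ℂ)+1) else 0 := by
  have hn : ((2*(L:ℝ)+1) : ℝ) ≠ 0 := by positivity
  have hω : ∀ i : Fin (2*L+1), Complex.exp ((k:ℂ) * (2 * (π:ℂ) * ((i:ℕ):ℂ) / (2*(L:ℂ)+1)) * I)
      = Complex.exp (2*(π:ℂ)*I*k/(2*(L:ℂ)+1)) ^ (i:ℕ) := by
    intro i
    rw [← Complex.exp_nat_mul]
    congr 1
    field_simp
  simp_rw [hω]
  rw [Fin.sum_univ_eq_sum_range]
  by_cases hk : k = 0
  · subst hk
    simp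
  · rw [if_neg hk]
    have hnC : (2*(L:ℂ)+1) ≠ 0 := by
      intro h
      have : ((2*(L:ℝ)+1 : ℝ):ℂ) = 0 := by push_cast; exact_mod_cast h
      exact hn (by exact_mod_cast this)
    have hπ : (π:ℂ) ≠ 0 := Complex.ofReal_ne_zero.mpr Real.pi_ne_zero
    have hω1 : Complex.exp (2*(π:ℂ)*I*k/(2*(L:ℂ)+1)) ≠ 1 := by
      intro h
      rw [Complex.exp_eq_one_iff] at h
      obtain ⟨m, hm⟩ := h
      have h3 : ((k:ℂ) - m*(2*(L:ℂ)+1)) * (2*(π:ℂ)*I) = 0 := by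
        field_simp at hm
        linear_combination (2*(π:ℂ)*I) * hm
      have h4 : (k:ℂ) = m*(2*(L:ℂ)+1) := by
        rcases mul_eq_zero.mp h3 with h | h
        · exact sub_eq_zero.mp h
        · exact absurd h (by simp [hπ, Complex.I_ne_zero])
      have h5 : k = m * (2*(L:ℤ)+1) := by exact_mod_cast h4
      rcases lt_trichotomy m 0 with h | h | h
      · nlinarith
      · subst h; simp at h5; exact hk h5
      · nlinarith
    have hpow : Complex.exp (2*(π:ℂ)*I*k/(2*(L:ℂ)+1)) ^ (2*L+1) = 1 := by
      rw [← Complex.exp_nat_mul]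
      rw [show ((2*L+1 : ℕ):ℂ) * (2*(π:ℂ)*I*k/(2*(L:ℂ)+1)) = (k:ℂ)*(2*(π:ℂ)*I) by
        push_cast; field_simp]
      exact Complex.exp_int_mul_two_pi_mul_I k
    rw [geom_sum_eq hω1, hpow]
    simp

private lemma int_exp (k : ℤ) :
    (∫ θ in (0:ℝ)..(2*π), Complex.exp ((k:ℂ) * (θ:ℂ) * I)) = if k = 0 then (2*(π:ℂ)) else 0 := by
  by_cases hk : k = 0
  · subst hk
    simp [Complex.real_smul]
  · rw [if_neg hk]
    have hc : (k:ℂ) * I ≠ 0 :=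
      mul_ne_zero (Int.cast_ne_zero.mpr hk) Complex.I_ne_zero
    have h := integral_exp_mul_complex (a := 0) (b := 2*π) hc
    simp_rw [show ∀ θ:ℝ, (k:ℂ) * (θ:ℂ) * I = (k:ℂ)*I*(θ:ℂ) from fun θ => by ring]
    rw [h]
    rw [show (k:ℂ)*I*((2*π:ℝ):ℂ) = (k:ℂ)*(2*(π:ℂ)*I) by push_cast; ring]
    rw [Complex.exp_int_mul_two_pi_mul_I]
    simp

private lemma core (L a b : ℕ) (hab : a + b ≤ 2*L) :
    (∑ i : Fin (2*L+1), Real.cos (2*π*(i:ℕ)/(2*(L:ℝ)+1))^a * Real.sin (2*π*(i:ℕ)/(2*(L:ℝ)+1))^b)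
        / (2*(L:ℝ)+1)
      = (1/(2*π)) * ∫ θ in (0:ℝ)..(2*π), Real.cos θ^a * Real.sin θ^b := by
  have hπ : (π:ℂ) ≠ 0 := Complex.ofReal_ne_zero.mpr Real.pi_ne_zero
  have hnC : (2*(L:ℂ)+1) ≠ 0 := by
    have : ((2*(L:ℝ)+1 : ℝ):ℂ) ≠ 0 := Complex.ofReal_ne_zero.mpr (by positivity)
    push_cast at this
    exact this
  apply Complex.ofReal_injective
  rw [Complex.ofReal_div, Complex.ofReal_mul, Complex.ofReal_sum,
    ← intervalIntegral.integral_ofReal]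
  simp_rw [trig_expand a b]
  push_cast
  have hcont : ∀ (K : ℂ), Continuous fun θ : ℝ => Complex.exp (K * (θ:ℂ) * I) := by
    intro K
    fun_prop
  conv_lhs => rw [Finset.sum_comm, Finset.sum_div]
  rw [intervalIntegral.integral_finset_sum (f := fun s (θ : ℝ) => ∑ t ∈ range (b + 1),
      ((a.choose s : ℂ) * (b.choose t) * (-1)^(b-t) / (2^a * (2*I)^b)) *
        Complex.exp ((2*(s:ℂ) + 2*(t:ℂ) - (a:ℂ) - (b:ℂ)) * θ * I)) (fun s _ => (continuous_finset_sum _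
      (fun t _ => continuous_const.mul (hcont _))).intervalIntegrable _ _), Finset.mul_sum]
  refine Finset.sum_congr rfl fun s hs => ?_
  conv_lhs => rw [Finset.sum_comm, Finset.sum_div]
  rw [intervalIntegral.integral_finset_sum (f := fun t (θ : ℝ) =>
      ((a.choose s : ℂ) * (b.choose t) * (-1)^(b-t) / (2^a * (2*I)^b)) *
        Complex.exp ((2*(s:ℂ) + 2*(t:ℂ) - (a:ℂ) - (b:ℂ)) * θ * I))
      (fun t _ => (continuous_const.mul (hcont _)).intervalIntegrable _ _), Finset.mul_sum]
  refine Finset.sum_congr rfl fun t ht => ?_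
  rw [Finset.mem_range_succ_iff] at hs ht
  set k : ℤ := 2*s+2*t-a-b with hkdef
  have hK : (2*(s:ℂ)+2*(t:ℂ)-(a:ℂ)-(b:ℂ)) = (k:ℂ) := by rw [hkdef]; push_cast; ring
  rw [hK, ← Finset.mul_sum,
    sum_exp L k (by omega) (by omega),
    intervalIntegral.integral_const_mul, int_exp k]
  by_cases hk0 : k = 0
  · rw [if_pos hk0, if_pos hk0]
    field_simp
  · simp [hk0]

theorem stmt_12 (L : ℕ) (p : MvPolynomial (Fin 2) ℝ)
    (hp : p.totalDegree ≤ 2 * L) :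
    (∑ i : Fin (2 * L + 1),
        MvPolynomial.eval
          ![Real.cos (2 * π * i / (2 * L + 1)),
            Real.sin (2 * π * i / (2 * L + 1))] p) / (2 * L + 1)
      = (1 / (2 * π)) *
          ∫ θ in (0 : ℝ)..(2 * π),
            MvPolynomial.eval ![Real.cos θ, Real.sin θ] p := by
  classical
  have hcont : ∀ q : MvPolynomial (Fin 2) ℝ,
      Continuous fun θ : ℝ => MvPolynomial.eval ![Real.cos θ, Real.sin θ] q := by
    intro q
    induction q using MvPolynomial.induction_on with
    | C a => simpa using continuous_const
    | add p q hp hq => simp only [map_add]; exact hp.add hq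
    | mul_X p i hp =>
      simp only [map_mul, MvPolynomial.eval_X]
      exact hp.mul (by fin_cases i <;> simp <;> fun_prop)
  have hev : ∀ (d : Fin 2 →₀ ℕ) (c : ℝ) (θ : ℝ),
      MvPolynomial.eval ![Real.cos θ, Real.sin θ] (MvPolynomial.monomial d c)
        = c * (Real.cos θ ^ (d 0) * Real.sin θ ^ (d 1)) := by
    intro d c θ
    rw [MvPolynomial.eval_monomial, Finsupp.prod_fintype _ _ (fun i => pow_zero _),
      Fin.prod_univ_two]
    simp
  conv_lhs => rw [MvPolynomial.as_sum p]
  conv_rhs => rw [MvPolynomial.as_sum p]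
  simp only [map_sum]
  rw [intervalIntegral.integral_finset_sum (fun d _ => (hcont _).intervalIntegrable _ _),
    Finset.mul_sum]
  conv_lhs => rw [Finset.sum_comm, Finset.sum_div]
  refine Finset.sum_congr rfl fun d hd => ?_
  have hdeg : d 0 + d 1 ≤ 2*L := by
    have h1 := MvPolynomial.le_totalDegree hd
    have h2 : (d.sum fun _ e => e) = d 0 + d 1 := by
      rw [Finsupp.sum_fintype _ _ (fun i => rfl), Fin.sum_univ_two]
    omega
  simp_rw [hev]
  rw [intervalIntegral.integral_const_mul, ← Finset.mul_sum, mul_div_assoc,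
    core L (d 0) (d 1) hdeg]
  ring
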